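/- Let n ∈ ℕ, let Γ be a subgroup of the permutations of Fin n, let F ⊆ (Fin n → ℝ) satisfy γ • F = F for all γ ∈ Γ, and let f : (Fin n → ℝ) → ℝ satisfy f (γ • x) = f x for all γ ∈ Γ and all x. Define X_Γ = { x : Fin n → ℝ | ∀ γ ∈ Γ, x ⪰ γ • x }. Then: (a) for every x ∈ F there exists ξ ∈ Γ with ξ • x ∈ F ∩ X_Γ; and (b) the image f '' F equals f '' (F ∩ X_Γ); in particular, minimizing f over F and over F ∩ X_Γ yields the same set of attained objective values and the same feasibility status. -/

import Mathlib

/-- Action of a permutation of `Fin n` on vectors `x : Fin n → ℝ`: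
`(γ • x) i = x (γ⁻¹ i)`. -/
def pact {n : ℕ} (γ : Equiv.Perm (Fin n)) (x : Fin n → ℝ) : Fin n → ℝ :=
  fun i => x (γ⁻¹ i)

/-- Lexicographic order `u ⪰ v` on `Fin m → ℝ`. -/
def lexGe {m : ℕ} (u v : Fin m → ℝ) : Prop :=
  u = v ∨ ∃ k : Fin m, (∀ i : Fin m, i < k → u i = v i) ∧ v k < u k

lemma pact_mul {n : ℕ} (γ ξ : Equiv.Perm (Fin n)) (x : Fin n → ℝ) :
    pact (γ * ξ) x = pact γ (pact ξ x) := by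
  funext i
  simp [pact, mul_inv_rev]

lemma lexGe_iff {m : ℕ} (u v : Fin m → ℝ) :
    lexGe u v ↔ toLex v ≤ toLex u := by
  rw [le_iff_lt_or_eq]
  constructor
  · rintro (h | ⟨k, h1, h2⟩)
    · exact Or.inr (by simp [h])
    · exact Or.inl ⟨k, fun j hj => (h1 j hj).symm, h2⟩
  · rintro (⟨k, h1, h2⟩ | h)
    · exact Or.inr ⟨k, fun j hj => (h1 j hj).symm, h2⟩
    · exact Or.inl (by simpa using h.symm)

theorem stmt0 (n : ℕ) (Γ : Subgroup (Equiv.Perm (Fin n)))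
    (F : Set (Fin n → ℝ)) (hF : ∀ γ ∈ Γ, pact γ '' F = F)
    (f : (Fin n → ℝ) → ℝ) (hf : ∀ γ ∈ Γ, ∀ x : Fin n → ℝ, f (pact γ x) = f x) :
    (∀ x ∈ F, ∃ ξ ∈ Γ, pact ξ x ∈ F ∩ {x | ∀ γ ∈ Γ, lexGe x (pact γ x)}) ∧
      f '' F = f '' (F ∩ {x | ∀ γ ∈ Γ, lexGe x (pact γ x)}) ∧
      (F = ∅ ↔ F ∩ {x | ∀ γ ∈ Γ, lexGe x (pact γ x)} = ∅) := by
  classical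
  have hwf : WellFoundedLT (Fin n) := inferInstance
  letI L : LinearOrder (Lex (Fin n → ℝ)) :=
    @Pi.Lex.linearOrder (Fin n) (fun _ => ℝ) _ hwf _
  have key : ∀ x ∈ F, ∃ ξ ∈ Γ, pact ξ x ∈ F ∩ {x | ∀ γ ∈ Γ, lexGe x (pact γ x)} := by
    intro x hx
    obtain ⟨ξ, hξmem, hmax⟩ := @Finset.exists_max_image (Lex (Fin n → ℝ)) _ L
      (Finset.univ.filter (· ∈ Γ)) (fun γ => toLex (pact γ x))
      ⟨1, by simp [Γ.one_mem]⟩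
    have hξΓ : ξ ∈ Γ := by simpa using hξmem
    refine ⟨ξ, hξΓ, ?_, ?_⟩
    · rw [← hF ξ hξΓ]; exact ⟨x, hx, rfl⟩
    · intro γ hγ
      rw [← pact_mul]
      rcases (hmax (γ * ξ) (by simp [Γ.mul_mem hγ hξΓ])).lt_or_eq with hlt | heq
      · obtain ⟨k, h1, h2⟩ := hlt
        exact Or.inr ⟨k, fun j hj => (h1 j hj).symm, h2⟩
      · exact Or.inl (by simpa [toLex_inj] using heq.symm)
  refine ⟨key, ?_, ?_⟩
  · apply Set.Subset.antisymm
    · rintro _ ⟨x, hx, rfl⟩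
      obtain ⟨ξ, hξΓ, hmem⟩ := key x hx
      exact ⟨pact ξ x, hmem, hf ξ hξΓ x⟩
    · exact Set.image_mono (f := f) Set.inter_subset_left
  · constructor
    · intro h; rw [h]; simp
    · intro h
      by_contra hne
      obtain ⟨x, hx⟩ := Set.nonempty_iff_ne_empty.2 hne
      obtain ⟨ξ, hξΓ, hmem⟩ := key x hx
      rw [h] at hmem
      exact hmem
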